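/- Let g: ℝ → (0,∞) be continuous and φ*: [0,∞) → ℝ be continuous and nonincreasing. Define M(r) = 2π ∫₀^r g(φ*(s)) s ds, A(r) = 2π ∫₀^r G(φ*(s)) s ds where G is a primitive of g, and H(r) = ½ M(r)² + 2π r³ d/dr(A(r)/r²). If the differential inequality -2πr (φ*)'(r) ≤ M(r) holds for all r > 0, then H'(r) ≥ 0 for all r > 0. -/

import Mathlib

open Real intervalIntegral

/-- Lemma 4 (differential form): with `M(r) = 2π∫₀^r g(φ*(s)) s ds`,
`A(r) = 2π∫₀^r G(φ*(s)) s ds` (`G' = g`) and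
`H(r) = ½M(r)² + 2π(rA'(r) - 2A(r))`, the isoperimetric-type inequality
`-2πr (φ*)'(r) ≤ M(r)` implies `H'(r) ≥ 0` for all `r > 0`. -/
theorem H_monotone
    (g G φstar M A H : ℝ → ℝ)
    (hg : Continuous g) (hgpos : ∀ t, 0 < g t)
    (hG : ∀ t, HasDerivAt G (g t) t)
    (hφ : ContDiff ℝ 1 φstar) (hφmono : Antitone φstar)
    (hM : ∀ r, M r = 2 * π * ∫ s in (0 : ℝ)..r, g (φstar s) * s)
    (hA : ∀ r, A r = 2 * π * ∫ s in (0 : ℝ)..r, G (φstar s) * s)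
    (hH : ∀ r, H r = (1 / 2) * (M r) ^ 2 + 2 * π * (r * deriv A r - 2 * A r))
    (hineq : ∀ r > (0 : ℝ), -(2 * π * r * deriv φstar r) ≤ M r) :
    ∀ r > (0 : ℝ), 0 ≤ deriv H r := by
  have hφc : Continuous φstar := hφ.continuous
  have hGd : Differentiable ℝ G := fun t => (hG t).differentiableAt
  have hGc : Continuous G := hGd.continuous
  have hφd : ∀ r, HasDerivAt φstar (deriv φstar r) r :=
    fun r => ((hφ.differentiable one_ne_zero) r).hasDerivAt
  have hc1 : Continuous (fun s => g (φstar s) * s) := (hg.comp hφc).mul continuous_id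
  have hc2 : Continuous (fun s => G (φstar s) * s) := (hGc.comp hφc).mul continuous_id
  have hMfun : M = fun x => 2 * π * ∫ s in (0 : ℝ)..x, g (φstar s) * s := funext hM
  have hAfun : A = fun x => 2 * π * ∫ s in (0 : ℝ)..x, G (φstar s) * s := funext hA
  have hMd : ∀ r, HasDerivAt M (2 * π * (g (φstar r) * r)) r := by
    intro r
    rw [hMfun]
    exact ((hc1.integral_hasStrictDerivAt 0 r).hasDerivAt).const_mul (2 * π)
  have hAd : ∀ r, HasDerivAt A (2 * π * (G (φstar r) * r)) r := by
    intro r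
    rw [hAfun]
    exact ((hc2.integral_hasStrictDerivAt 0 r).hasDerivAt).const_mul (2 * π)
  have hderivA : ∀ r, deriv A r = 2 * π * (G (φstar r) * r) := fun r => (hAd r).deriv
  have hHfun : H = fun x =>
      (1 / 2) * (M x) ^ 2 + 2 * π * (x * (2 * π * (G (φstar x) * x)) - 2 * A x) := by
    funext x
    rw [hH x, hderivA x]
  intro r hr
  -- derivative of G ∘ φstar
  have hGφ : HasDerivAt (fun s => G (φstar s)) (g (φstar r) * deriv φstar r) r :=
    (hG (φstar r)).comp r (hφd r)
  have h1 : HasDerivAt (fun x => (1 / 2) * (M x) ^ 2)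
      ((1 / 2) * ((2 : ℕ) * (M r) ^ 1 * (2 * π * (g (φstar r) * r)))) r :=
    ((hMd r).pow 2).const_mul (1 / 2)
  have h2 : HasDerivAt (fun x => 2 * π * (G (φstar x) * x))
      (2 * π * (g (φstar r) * deriv φstar r * r + G (φstar r) * 1)) r :=
    (hGφ.mul (hasDerivAt_id r)).const_mul (2 * π)
  have h3 : HasDerivAt (fun x => x * (2 * π * (G (φstar x) * x)))
      (1 * (2 * π * (G (φstar r) * r)) +
        r * (2 * π * (g (φstar r) * deriv φstar r * r + G (φstar r) * 1))) r :=
    (hasDerivAt_id r).mul h2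
  have h4 : HasDerivAt (fun x => x * (2 * π * (G (φstar x) * x)) - 2 * A x)
      (1 * (2 * π * (G (φstar r) * r)) +
        r * (2 * π * (g (φstar r) * deriv φstar r * r + G (φstar r) * 1)) -
        2 * (2 * π * (G (φstar r) * r))) r :=
    h3.sub ((hAd r).const_mul 2)
  have hHd : HasDerivAt H
      ((1 / 2) * ((2 : ℕ) * (M r) ^ 1 * (2 * π * (g (φstar r) * r))) +
        2 * π * (1 * (2 * π * (G (φstar r) * r)) +
          r * (2 * π * (g (φstar r) * deriv φstar r * r + G (φstar r) * 1)) -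
          2 * (2 * π * (G (φstar r) * r)))) r := by
    rw [hHfun]
    exact h1.add (h4.const_mul (2 * π))
  rw [hHd.deriv]
  have key : 0 ≤ M r + 2 * π * r * deriv φstar r := by
    have := hineq r hr
    linarith
  have hfac : (0 : ℝ) ≤ 2 * π * (g (φstar r)) * r := by
    have := hgpos (φstar r)
    have := pi_pos
    positivity
  nlinarith [mul_nonneg hfac key]
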